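/- Fix n ∈ ℕ and ε ∈ [0, 1/2]. If P is an extreme point of the set of probability distributions on {0,1}^n satisfying the Santha–Vazirani condition with parameter ε, then for every 0 ≤ i < n and every prefix (x_1,…,x_i) with positive marginal probability, the conditional probability P(X_{i+1} = 0 | X_1 = x_1, …, X_i = x_i) equals either 1/2 + ε or 1/2 − ε. -/

import Mathlib

open Finset

/-- Hamming weight of a binary string. -/
def hammingWeight {n : ℕ} (x : Fin n → Bool) : ℕ :=
  (Finset.univ.filter (fun j => x j = true)).card

/-- The Bernoulli distribution with parameter `p₊ = 1/2 + ε` on `{0,1}^n`: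
`B(x) = (1/2+ε)^(n−w(x)) (1/2−ε)^(w(x))`. -/
noncomputable def bern (n : ℕ) (ε : ℝ) (x : Fin n → Bool) : ℝ :=
  (1/2 + ε) ^ (n - hammingWeight x) * (1/2 - ε) ^ (hammingWeight x)

/-- Marginal probability of a prefix `y` of length `i` under `P`. -/
noncomputable def prefMarg {n : ℕ} (P : (Fin n → Bool) → ℝ) {i : ℕ} (h : i ≤ n)
    (y : Fin i → Bool) : ℝ :=
  ∑ x ∈ Finset.univ.filter
      (fun x : Fin n → Bool => ∀ j : Fin i, x (Fin.castLE h j) = y j), P x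

/-- `P` is a probability distribution on `{0,1}^n` satisfying the Santha–Vazirani
condition with parameter `ε`: every conditional probability of the next bit given
a prefix of positive probability lies in `[1/2−ε, 1/2+ε]`. -/
noncomputable def IsSV (n : ℕ) (ε : ℝ) (P : (Fin n → Bool) → ℝ) : Prop :=
  (∀ x, 0 ≤ P x) ∧ (∑ x, P x = 1) ∧
  ∀ (i : ℕ) (hi : i < n) (y : Fin i → Bool),
    0 < prefMarg P hi.le y → ∀ b : Bool,
      1/2 - ε ≤ prefMarg P hi (Fin.snoc y b) / prefMarg P hi.le y ∧
      prefMarg P hi (Fin.snoc y b) / prefMarg P hi.le y ≤ 1/2 + ε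

/-- The set of SV distributions with parameter `ε` on `{0,1}^n`. -/
noncomputable def SVset (n : ℕ) (ε : ℝ) : Set ((Fin n → Bool) → ℝ) :=
  {P | IsSV n ε P}

/-- The `K`-th Ky Fan norm of `Q` : the sum of the `K` largest values of `Q`
(with multiplicity), i.e. the maximal sum of `Q` over subsets of cardinality `K`. -/
noncomputable def kyFan {Z : Type*} [Fintype Z] (K : ℕ) (Q : Z → ℝ) : ℝ :=
  sSup ((fun S : Finset Z => ∑ z ∈ S, Q z) '' {S : Finset Z | S.card = K})

lemma prefMarg_nonneg {n : ℕ} {P : (Fin n → Bool) → ℝ} (hP : ∀ x, 0 ≤ P x)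
    {i : ℕ} (h : i ≤ n) (y : Fin i → Bool) : 0 ≤ prefMarg P h y :=
  Finset.sum_nonneg fun x _ => hP x

lemma prefMarg_add {n : ℕ} (P g : (Fin n → Bool) → ℝ) (s : ℝ) {i : ℕ} (h : i ≤ n)
    (y : Fin i → Bool) :
    prefMarg (fun x => P x + s * g x) h y = prefMarg P h y + s * prefMarg g h y := by
  simp [prefMarg, Finset.sum_add_distrib, Finset.mul_sum]

/-- snoc-prefix characterization. -/

lemma ext_snoc_iff {m i : ℕ} (h : i + 1 ≤ m) (y : Fin i → Bool) (b : Bool)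
    (x : Fin m → Bool) :
    (∀ k : Fin (i+1), x (Fin.castLE h k) = (Fin.snoc y b : Fin (i+1) → Bool) k) ↔
      ((∀ k : Fin i, x (Fin.castLE (le_trans (Nat.le_succ i) h) k) = y k) ∧ x ⟨i, h⟩ = b) := by
  constructor
  · intro h1
    refine ⟨fun k => ?_, ?_⟩
    · have := h1 k.castSucc
      rwa [Fin.snoc_castSucc] at this
    · have := h1 (Fin.last i)
      rwa [Fin.snoc_last] at this
  · rintro ⟨h1, h2⟩ k
    refine Fin.lastCases ?_ (fun k' => ?_) k
    · rw [Fin.snoc_last]; exact h2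
    · rw [Fin.snoc_castSucc]; exact h1 k'

/-- sum over intersection of two prefix constraints, shorter `z` first. -/

lemma sum_ext_inter {n j m : ℕ} (P : (Fin n → Bool) → ℝ) (hj : j ≤ n) (hm : m ≤ n)
    (hjm : j ≤ m) (z : Fin j → Bool) (w : Fin m → Bool) :
    ∑ x ∈ Finset.univ.filter (fun x : Fin n → Bool =>
        (∀ k : Fin j, x (Fin.castLE hj k) = z k) ∧ (∀ k : Fin m, x (Fin.castLE hm k) = w k)),
      P x
    = if ∀ k : Fin j, w (Fin.castLE hjm k) = z k then prefMarg P hm w else 0 := by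
  split_ifs with hc
  · refine Finset.sum_congr ?_ (fun _ _ => rfl)
    apply Finset.filter_congr
    intro x _
    constructor
    · exact fun hx => hx.2
    · intro hx
      refine ⟨fun k => ?_, hx⟩
      have : x (Fin.castLE hj k) = x (Fin.castLE hm (Fin.castLE hjm k)) := rfl
      rw [this, hx (Fin.castLE hjm k), hc k]
  · push_neg at hc
    obtain ⟨k, hk⟩ := hc
    rw [Finset.filter_eq_empty_iff.mpr, Finset.sum_empty]
    rintro x - ⟨h1, h2⟩
    apply hk
    rw [← h2 (Fin.castLE hjm k)]
    exact h1 k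

/-- sum over intersection of two prefix constraints, longer `w` first. -/

lemma sum_ext_inter' {n j m : ℕ} (P : (Fin n → Bool) → ℝ) (hj : j ≤ n) (hm : m ≤ n)
    (hjm : j ≤ m) (z : Fin j → Bool) (w : Fin m → Bool) :
    ∑ x ∈ Finset.univ.filter (fun x : Fin n → Bool =>
        (∀ k : Fin m, x (Fin.castLE hm k) = w k) ∧ (∀ k : Fin j, x (Fin.castLE hj k) = z k)),
      P x
    = if ∀ k : Fin j, w (Fin.castLE hjm k) = z k then prefMarg P hm w else 0 := by
  rw [← sum_ext_inter P hj hm hjm z w]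
  refine Finset.sum_congr ?_ (fun _ _ => rfl)
  apply Finset.filter_congr
  intro x _
  exact and_comm

/-- Additivity of prefix marginals. -/

lemma prefMarg_split {n i : ℕ} (P : (Fin n → Bool) → ℝ) (hi : i < n) (y : Fin i → Bool) :
    prefMarg P hi.le y = prefMarg P hi (Fin.snoc y false) + prefMarg P hi (Fin.snoc y true) := by
  have hb : ∀ b : Bool, prefMarg P hi (Fin.snoc y b) =
      ∑ x ∈ Finset.univ.filter (fun x : Fin n → Bool =>
        (∀ k : Fin i, x (Fin.castLE hi.le k) = y k) ∧ x ⟨i, hi⟩ = b), P x := by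
    intro b
    refine Finset.sum_congr ?_ (fun _ _ => rfl)
    apply Finset.filter_congr
    intro x _
    exact ext_snoc_iff hi y b x
  rw [hb false, hb true, prefMarg]
  rw [← Finset.sum_filter_add_sum_filter_not
      (Finset.univ.filter (fun x : Fin n → Bool => ∀ k : Fin i, x (Fin.castLE hi.le k) = y k))
      (fun x => x ⟨i, hi⟩ = false) P]
  rw [Finset.filter_filter, Finset.filter_filter]
  have hrw : (Finset.univ.filter (fun x : Fin n → Bool =>
      (∀ k : Fin i, x (Fin.castLE hi.le k) = y k) ∧ ¬x ⟨i, hi⟩ = false)) =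
      Finset.univ.filter (fun x : Fin n → Bool =>
      (∀ k : Fin i, x (Fin.castLE hi.le k) = y k) ∧ x ⟨i, hi⟩ = true) := by
    apply Finset.filter_congr
    intro x _
    simp
  rw [hrw]

/-- The perturbation direction. -/

noncomputable def gfun {n i : ℕ} (hi : i < n) (y : Fin i → Bool) (P : (Fin n → Bool) → ℝ)
    (A B : ℝ) : (Fin n → Bool) → ℝ := fun x =>
  (if ∀ k : Fin (i+1), x (Fin.castLE hi k) = (Fin.snoc y false : Fin (i+1) → Bool) k
    then P x / A else 0)
  - (if ∀ k : Fin (i+1), x (Fin.castLE hi k) = (Fin.snoc y true : Fin (i+1) → Bool) k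
    then P x / B else 0)

lemma prefMarg_gfun {n i j : ℕ} (hi : i < n) (y : Fin i → Bool) (P : (Fin n → Bool) → ℝ)
    (A B : ℝ) (hj : j ≤ n) (z : Fin j → Bool) :
    prefMarg (gfun hi y P A B) hj z =
      (∑ x ∈ Finset.univ.filter (fun x : Fin n → Bool =>
          (∀ k : Fin j, x (Fin.castLE hj k) = z k) ∧
          (∀ k : Fin (i+1), x (Fin.castLE hi k) = (Fin.snoc y false : Fin (i+1) → Bool) k)),
        P x) / A
      - (∑ x ∈ Finset.univ.filter (fun x : Fin n → Bool =>
          (∀ k : Fin j, x (Fin.castLE hj k) = z k) ∧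
          (∀ k : Fin (i+1), x (Fin.castLE hi k) = (Fin.snoc y true : Fin (i+1) → Bool) k)),
        P x) / B := by
  rw [prefMarg, Finset.sum_div, Finset.sum_div]
  unfold gfun
  rw [Finset.sum_sub_distrib, ← Finset.sum_filter, ← Finset.sum_filter,
    Finset.filter_filter, Finset.filter_filter, ← Finset.sum_div, ← Finset.sum_div]

/-- For a prefix no longer than `i`, the perturbation has zero marginal. -/

lemma prefMarg_gfun_of_le {n i j : ℕ} (hi : i < n) (y : Fin i → Bool) (P : (Fin n → Bool) → ℝ)
    (hA : prefMarg P hi (Fin.snoc y false) ≠ 0) (hB : prefMarg P hi (Fin.snoc y true) ≠ 0)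
    (hj : j ≤ n) (hji : j ≤ i) (z : Fin j → Bool) :
    prefMarg (gfun hi y P (prefMarg P hi (Fin.snoc y false)) (prefMarg P hi (Fin.snoc y true)))
      hj z = 0 := by
  rw [prefMarg_gfun]
  rw [sum_ext_inter P hj hi (hji.trans (Nat.le_succ i)) z _,
      sum_ext_inter P hj hi (hji.trans (Nat.le_succ i)) z _]
  have hsnoc : ∀ (b : Bool) (k : Fin j),
      (Fin.snoc y b : Fin (i+1) → Bool) (Fin.castLE (hji.trans (Nat.le_succ i)) k)
        = y (Fin.castLE hji k) := by
    intro b k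
    have : (Fin.castLE (hji.trans (Nat.le_succ i)) k : Fin (i+1))
        = Fin.castSucc (Fin.castLE hji k) := rfl
    rw [this, Fin.snoc_castSucc]
  by_cases hc : ∀ k : Fin j, y (Fin.castLE hji k) = z k
  · have c0 : ∀ k : Fin j, (Fin.snoc y false : Fin (i+1) → Bool)
        (Fin.castLE (hji.trans (Nat.le_succ i)) k) = z k :=
      fun k => by rw [hsnoc false k]; exact hc k
    have c1 : ∀ k : Fin j, (Fin.snoc y true : Fin (i+1) → Bool)
        (Fin.castLE (hji.trans (Nat.le_succ i)) k) = z k :=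
      fun k => by rw [hsnoc true k]; exact hc k
    rw [if_pos c0, if_pos c1, div_self hA, div_self hB, sub_self]
  · have c0 : ¬∀ k : Fin j, (Fin.snoc y false : Fin (i+1) → Bool)
        (Fin.castLE (hji.trans (Nat.le_succ i)) k) = z k :=
      fun hcon => hc (fun k => by rw [← hsnoc false k]; exact hcon k)
    have c1 : ¬∀ k : Fin j, (Fin.snoc y true : Fin (i+1) → Bool)
        (Fin.castLE (hji.trans (Nat.le_succ i)) k) = z k :=
      fun hcon => hc (fun k => by rw [← hsnoc true k]; exact hcon k)
    rw [if_neg c0, if_neg c1, zero_div, zero_div, sub_self]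

/-- For a prefix strictly longer than `i`, the perturbation marginal is a multiple. -/

lemma prefMarg_gfun_of_gt {n i j : ℕ} (hi : i < n) (y : Fin i → Bool) (P : (Fin n → Bool) → ℝ)
    (A B : ℝ) (hij : i < j) (hj : j ≤ n) (z : Fin j → Bool) :
    prefMarg (gfun hi y P A B) hj z =
      if ∀ k : Fin i, z (Fin.castLE hij.le k) = y k then
        (if z ⟨i, hij⟩ = false then prefMarg P hj z / A else -(prefMarg P hj z / B))
      else 0 := by
  rw [prefMarg_gfun]
  have hcomm : ∀ (b : Bool), (∑ x ∈ Finset.univ.filter (fun x : Fin n → Bool =>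
      (∀ k : Fin j, x (Fin.castLE hj k) = z k) ∧
      (∀ k : Fin (i+1), x (Fin.castLE hi k) = (Fin.snoc y b : Fin (i+1) → Bool) k)), P x)
      = if ∀ k : Fin (i+1), z (Fin.castLE hij k) = (Fin.snoc y b : Fin (i+1) → Bool) k
        then prefMarg P hj z else 0 := by
    intro b
    rw [← sum_ext_inter' P hi hj hij (Fin.snoc y b) z]
  rw [hcomm false, hcomm true]
  by_cases hyz : ∀ k : Fin i, z (Fin.castLE hij.le k) = y k
  · rcases Bool.eq_false_or_eq_true (z ⟨i, hij⟩) with hzi | hzi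
    · have c0 : ¬∀ k : Fin (i+1), z (Fin.castLE hij k) = (Fin.snoc y false : Fin (i+1) → Bool) k :=
        fun hcon => Bool.false_ne_true
          (hzi.symm.trans ((ext_snoc_iff hij y false z).mp hcon).2).symm
      have c1 : ∀ k : Fin (i+1), z (Fin.castLE hij k) = (Fin.snoc y true : Fin (i+1) → Bool) k :=
        (ext_snoc_iff hij y true z).mpr ⟨hyz, hzi⟩
      have c2 : ¬(z ⟨i, hij⟩ = false) :=
        fun h => Bool.false_ne_true (hzi.symm.trans h).symm
      rw [if_neg c0, if_pos c1, if_pos hyz, if_neg c2, zero_div, zero_sub]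
    · have c0 : ∀ k : Fin (i+1), z (Fin.castLE hij k) = (Fin.snoc y false : Fin (i+1) → Bool) k :=
        (ext_snoc_iff hij y false z).mpr ⟨hyz, hzi⟩
      have c1 : ¬∀ k : Fin (i+1), z (Fin.castLE hij k) = (Fin.snoc y true : Fin (i+1) → Bool) k :=
        fun hcon => Bool.false_ne_true
          (hzi.symm.trans ((ext_snoc_iff hij y true z).mp hcon).2)
      rw [if_pos c0, if_neg c1, if_pos hyz, if_pos hzi, zero_div, sub_zero]
  · have c0 : ¬∀ k : Fin (i+1), z (Fin.castLE hij k) = (Fin.snoc y false : Fin (i+1) → Bool) k :=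
      fun hcon => hyz ((ext_snoc_iff hij y false z).mp hcon).1
    have c1 : ¬∀ k : Fin (i+1), z (Fin.castLE hij k) = (Fin.snoc y true : Fin (i+1) → Bool) k :=
      fun hcon => hyz ((ext_snoc_iff hij y true z).mp hcon).1
    rw [if_neg c0, if_neg c1, if_neg hyz, zero_div, zero_div, sub_self]

lemma snoc_castLE' {j i : ℕ} (hij : i ≤ j) (z : Fin j → Bool) (b : Bool) (k : Fin i) :
    (Fin.snoc z b : Fin (j+1) → Bool) (Fin.castLE (hij.trans (Nat.le_succ j)) k)
      = z (Fin.castLE hij k) := by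
  rw [show (Fin.castLE (hij.trans (Nat.le_succ j)) k : Fin (j+1))
      = Fin.castSucc (Fin.castLE hij k) from rfl, Fin.snoc_castSucc]

lemma snoc_at' {j i : ℕ} (hij : i < j) (z : Fin j → Bool) (b : Bool) :
    (Fin.snoc z b : Fin (j+1) → Bool) ⟨i, Nat.lt_succ_of_lt hij⟩ = z ⟨i, hij⟩ := by
  rw [show (⟨i, Nat.lt_succ_of_lt hij⟩ : Fin (j+1)) = Fin.castSucc ⟨i, hij⟩ from rfl,
    Fin.snoc_castSucc]

lemma isSV_perturb {n i : ℕ} (hi : i < n) (y : Fin i → Bool) {ε : ℝ}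
    {P : (Fin n → Bool) → ℝ} (hSV : IsSV n ε P) (s A B : ℝ)
    (hAdef : A = prefMarg P hi (Fin.snoc y false)) (hBdef : B = prefMarg P hi (Fin.snoc y true))
    (hA : 0 < A) (hB : 0 < B) (hsA : |s| ≤ A) (hsB : |s| ≤ B)
    (hup : A + s ≤ (1/2 + ε) * (A + B)) (hlo : (1/2 - ε) * (A + B) ≤ A + s) :
    IsSV n ε (fun x => P x + s * gfun hi y P A B x) := by
  obtain ⟨hP0, hP1, hPc⟩ := hSV
  have hM : prefMarg P hi.le y = A + B := by
    rw [hAdef, hBdef]; exact prefMarg_split P hi y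
  have hA' : A ≠ 0 := hA.ne'
  have hB' : B ≠ 0 := hB.ne'
  have hAd : prefMarg P hi (Fin.snoc y false) ≠ 0 := by rw [← hAdef]; exact hA'
  have hBd : prefMarg P hi (Fin.snoc y true) ≠ 0 := by rw [← hBdef]; exact hB'
  have gle : ∀ (j : ℕ) (hj : j ≤ n) (hji : j ≤ i) (z : Fin j → Bool),
      prefMarg (gfun hi y P A B) hj z = 0 := by
    intro j hj hji z
    rw [hAdef, hBdef]
    exact prefMarg_gfun_of_le hi y P hAd hBd hj hji z
  refine ⟨?_, ?_, ?_⟩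
  · -- nonnegativity
    intro x
    simp only [gfun]
    by_cases h0 : ∀ k : Fin (i+1), x (Fin.castLE hi k) = (Fin.snoc y false : Fin (i+1) → Bool) k
    · have h1 : ¬∀ k : Fin (i+1), x (Fin.castLE hi k) = (Fin.snoc y true : Fin (i+1) → Bool) k := by
        intro h1
        have := (h0 (Fin.last i)).symm.trans (h1 (Fin.last i))
        rw [Fin.snoc_last, Fin.snoc_last] at this
        exact Bool.false_ne_true this
      rw [if_pos h0, if_neg h1, sub_zero]
      have key : A * (P x / A) = P x := by field_simp
      nlinarith [mul_nonneg (div_nonneg (hP0 x) hA.le)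
        (by linarith [neg_le_of_abs_le hsA] : (0:ℝ) ≤ s + A), key]
    · rw [if_neg h0]
      by_cases h1 : ∀ k : Fin (i+1), x (Fin.castLE hi k) = (Fin.snoc y true : Fin (i+1) → Bool) k
      · rw [if_pos h1, zero_sub]
        have key : B * (P x / B) = P x := by field_simp
        nlinarith [mul_nonneg (div_nonneg (hP0 x) hB.le)
          (by linarith [le_of_abs_le hsB] : (0:ℝ) ≤ B - s), key]
      · rw [if_neg h1]
        simpa using hP0 x
  · -- total mass
    rw [Finset.sum_add_distrib, hP1, ← Finset.mul_sum]
    have hzero : ∑ x, gfun hi y P A B x = 0 := by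
      have e1 : (Finset.univ.filter (fun x : Fin n → Bool =>
          ∀ k : Fin 0, x (Fin.castLE (Nat.zero_le n) k) = (fun k : Fin 0 => k.elim0) k))
          = Finset.univ := Finset.filter_true_of_mem (fun x _ => fun k => k.elim0)
      have e2 : ∑ x, gfun hi y P A B x
          = prefMarg (gfun hi y P A B) (Nat.zero_le n) (fun k => k.elim0) := by
        rw [prefMarg, e1]
      rw [e2]
      exact gle 0 (Nat.zero_le n) (Nat.zero_le i) _
    rw [hzero, mul_zero, add_zero]
  · -- conditionals
    intro j hj z hzpos b
    rcases lt_trichotomy j i with hji | hji | hij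
    · have e1 : prefMarg (fun x => P x + s * gfun hi y P A B x) hj.le z
          = prefMarg P hj.le z := by
        rw [prefMarg_add, gle j hj.le hji.le z, mul_zero, add_zero]
      have e2 : prefMarg (fun x => P x + s * gfun hi y P A B x) hj (Fin.snoc z b)
          = prefMarg P hj (Fin.snoc z b) := by
        rw [prefMarg_add, gle (j+1) hj hji (Fin.snoc z b), mul_zero, add_zero]
      rw [e1] at hzpos ⊢
      rw [e2]
      exact hPc j hj z hzpos b
    · subst hji
      have e1 : prefMarg (fun x => P x + s * gfun hi y P A B x) hj.le z
          = prefMarg P hj.le z := by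
        rw [prefMarg_add, gle j hj.le (le_refl j) z, mul_zero, add_zero]
      by_cases hzy : z = y
      · subst hzy
        have hMz : prefMarg P hj.le z = A + B := hM
        have hM0 : (0:ℝ) < A + B := by linarith
        have ef : prefMarg (fun x => P x + s * gfun hi z P A B x) hj (Fin.snoc z false)
            = A + s := by
          rw [prefMarg_add, prefMarg_gfun_of_gt hi z P A B (Nat.lt_succ_self j) hj (Fin.snoc z false)]
          rw [if_pos, if_pos]
          · have : prefMarg P hj (Fin.snoc z false) = A := hAdef.symm
            rw [this, div_self hA', mul_one]
          · show (Fin.snoc z false : Fin (j+1) → Bool) (Fin.last j) = false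
            simp
          · intro k
            exact snoc_castLE' (Nat.le_refl j) z false k
        have et : prefMarg (fun x => P x + s * gfun hi z P A B x) hj (Fin.snoc z true)
            = B - s := by
          rw [prefMarg_add, prefMarg_gfun_of_gt hi z P A B (Nat.lt_succ_self j) hj (Fin.snoc z true)]
          rw [if_pos, if_neg]
          · have : prefMarg P hj (Fin.snoc z true) = B := hBdef.symm
            rw [this, div_self hB']
            ring
          · show ¬(Fin.snoc z true : Fin (j+1) → Bool) (Fin.last j) = false
            rw [Fin.snoc_last]
            simp
          · intro k
            exact snoc_castLE' (Nat.le_refl j) z true k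
        have hsum : (1/2 + ε) * (A + B) + (1/2 - ε) * (A + B) = A + B := by ring
        rw [e1, hMz]
        cases b
        · rw [ef]
          constructor
          · rw [le_div_iff₀ hM0]; linarith
          · rw [div_le_iff₀ hM0]; linarith
        · rw [et]
          constructor
          · rw [le_div_iff₀ hM0]; linarith
          · rw [div_le_iff₀ hM0]; linarith
      · have e2 : prefMarg (fun x => P x + s * gfun hi y P A B x) hj (Fin.snoc z b)
            = prefMarg P hj (Fin.snoc z b) := by
          rw [prefMarg_add, prefMarg_gfun_of_gt hi y P A B (Nat.lt_succ_self j) hj (Fin.snoc z b)]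
          rw [if_neg, mul_zero, add_zero]
          intro hcon
          apply hzy
          funext k
          have := hcon k
          rwa [snoc_castLE' (Nat.le_refl j) z b k] at this
        rw [e1] at hzpos ⊢
        rw [e2]
        exact hPc j hj z hzpos b
    · -- i < j
      by_cases hyz : ∀ k : Fin i, z (Fin.castLE hij.le k) = y k
      · have hyz' : ∀ b' : Bool, ∀ k : Fin i,
            (Fin.snoc z b' : Fin (j+1) → Bool) (Fin.castLE (Nat.lt_succ_of_lt hij).le k) = y k := by
          intro b' k
          have h1 : (Fin.snoc z b' : Fin (j+1) → Bool) (Fin.castLE (Nat.lt_succ_of_lt hij).le k)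
              = z (Fin.castLE hij.le k) := snoc_castLE' hij.le z b' k
          rw [h1]; exact hyz k
        rcases Bool.eq_false_or_eq_true (z ⟨i, hij⟩) with hzi | hzi
        · -- z ⟨i⟩ = true ; factor 1 - s/B
          have hf' : (0:ℝ) ≤ 1 - s / B := by
            have h1 : s / B ≤ 1 := by rw [div_le_one hB]; exact le_of_abs_le hsB
            linarith
          have eD : prefMarg (fun x => P x + s * gfun hi y P A B x) hj.le z
              = prefMarg P hj.le z * (1 - s / B) := by
            rw [prefMarg_add, prefMarg_gfun_of_gt hi y P A B hij hj.le z, if_pos hyz, if_neg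
              (fun h => Bool.false_ne_true ((h.symm.trans hzi)))]
            ring
          have eN : prefMarg (fun x => P x + s * gfun hi y P A B x) hj (Fin.snoc z b)
              = prefMarg P hj (Fin.snoc z b) * (1 - s / B) := by
            rw [prefMarg_add, prefMarg_gfun_of_gt hi y P A B (Nat.lt_succ_of_lt hij) hj
              (Fin.snoc z b), if_pos (hyz' b), if_neg]
            · ring
            · rw [snoc_at' hij z b, hzi]
              exact (by simp)
          rw [eD] at hzpos
          have hPz0 : 0 ≤ prefMarg P hj.le z := prefMarg_nonneg hP0 hj.le z
          have hf : 0 < 1 - s / B := by nlinarith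
          have hPz : 0 < prefMarg P hj.le z := by nlinarith
          rw [eD, eN, mul_div_mul_right _ _ (ne_of_gt hf)]
          exact hPc j hj z hPz b
        · -- z ⟨i⟩ = false ; factor 1 + s/A
          have eD : prefMarg (fun x => P x + s * gfun hi y P A B x) hj.le z
              = prefMarg P hj.le z * (1 + s / A) := by
            rw [prefMarg_add, prefMarg_gfun_of_gt hi y P A B hij hj.le z, if_pos hyz, if_pos hzi]
            ring
          have eN : prefMarg (fun x => P x + s * gfun hi y P A B x) hj (Fin.snoc z b)
              = prefMarg P hj (Fin.snoc z b) * (1 + s / A) := by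
            rw [prefMarg_add, prefMarg_gfun_of_gt hi y P A B (Nat.lt_succ_of_lt hij) hj
              (Fin.snoc z b), if_pos (hyz' b), if_pos]
            · ring
            · rw [snoc_at' hij z b]; exact hzi
          rw [eD] at hzpos
          have hPz0 : 0 ≤ prefMarg P hj.le z := prefMarg_nonneg hP0 hj.le z
          have hf : 0 < 1 + s / A := by nlinarith
          have hPz : 0 < prefMarg P hj.le z := by nlinarith
          rw [eD, eN, mul_div_mul_right _ _ (ne_of_gt hf)]
          exact hPc j hj z hPz b
      · have hyz2 : ∀ b' : Bool, ¬∀ k : Fin i,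
            (Fin.snoc z b' : Fin (j+1) → Bool) (Fin.castLE (Nat.lt_succ_of_lt hij).le k) = y k := by
          intro b' hcon
          apply hyz
          intro k
          have := hcon k
          rwa [snoc_castLE' hij.le z b' k] at this
        have eD : prefMarg (fun x => P x + s * gfun hi y P A B x) hj.le z
            = prefMarg P hj.le z := by
          rw [prefMarg_add, prefMarg_gfun_of_gt hi y P A B hij hj.le z, if_neg hyz,
            mul_zero, add_zero]
        have eN : prefMarg (fun x => P x + s * gfun hi y P A B x) hj (Fin.snoc z b)
            = prefMarg P hj (Fin.snoc z b) := by
          rw [prefMarg_add, prefMarg_gfun_of_gt hi y P A B (Nat.lt_succ_of_lt hij) hj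
            (Fin.snoc z b), if_neg (hyz2 b), mul_zero, add_zero]
        rw [eD] at hzpos ⊢
        rw [eN]
        exact hPc j hj z hzpos b

/-- for an extreme point of the SV set, every conditional probability
of the next bit being 0 given a positive-probability prefix equals 1/2 + ε or 1/2 − ε. -/
theorem sv_extreme_points_conditionals_extremal
    (n : ℕ) (ε : ℝ) (hε0 : 0 ≤ ε) (hε : ε ≤ 1/2)
    (P : (Fin n → Bool) → ℝ) (hP : P ∈ Set.extremePoints ℝ (SVset n ε))
    (i : ℕ) (hi : i < n) (y : Fin i → Bool) (hy : 0 < prefMarg P hi.le y) :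
    prefMarg P hi (Fin.snoc y false) / prefMarg P hi.le y = 1/2 + ε ∨
    prefMarg P hi (Fin.snoc y false) / prefMarg P hi.le y = 1/2 - ε := by
  by_contra hcon
  push_neg at hcon
  obtain ⟨hne1, hne2⟩ := hcon
  have hSV : IsSV n ε P := hP.1
  set A := prefMarg P hi (Fin.snoc y false) with hAdef
  set B := prefMarg P hi (Fin.snoc y true) with hBdef
  set M := prefMarg P hi.le y with hMdef
  obtain ⟨hb1, hb2⟩ := hSV.2.2 i hi y hy false
  have hlt : A / M < 1/2 + ε := lt_of_le_of_ne hb2 hne1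
  have hgt : 1/2 - ε < A / M := lt_of_le_of_ne hb1 (Ne.symm hne2)
  have hMsplit : M = A + B := prefMarg_split P hi y
  have hApos : 0 < A := by
    have h0 : 0 < A / M := lt_of_le_of_lt (by linarith : (0:ℝ) ≤ 1/2 - ε) hgt
    rcases div_pos_iff.mp h0 with ⟨h, _⟩ | ⟨_, h2⟩
    · exact h
    · exact absurd hy (not_lt.mpr h2.le)
  have hAltM : A < (1/2+ε) * M := by rwa [div_lt_iff₀ hy] at hlt
  have hAgtM : (1/2-ε) * M < A := by rwa [lt_div_iff₀ hy] at hgt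
  have hBpos : 0 < B := by
    nlinarith [mul_nonneg (by linarith : (0:ℝ) ≤ 1/2 - ε) hy.le]
  set t := min (min A B) (min ((1/2+ε)*M - A) (A - (1/2-ε)*M)) with htdef
  have htpos : 0 < t :=
    lt_min (lt_min hApos hBpos) (lt_min (by linarith) (by linarith))
  have htA : t ≤ A := (min_le_left _ _).trans (min_le_left _ _)
  have htB : t ≤ B := (min_le_left _ _).trans (min_le_right _ _)
  have htU : t ≤ (1/2+ε)*M - A := (min_le_right _ _).trans (min_le_left _ _)
  have htL : t ≤ A - (1/2-ε)*M := (min_le_right _ _).trans (min_le_right _ _)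
  have habs : |t| = t := abs_of_pos htpos
  have habs' : |(-t)| = t := by rw [abs_neg, habs]
  have hQp : IsSV n ε (fun x => P x + t * gfun hi y P A B x) :=
    isSV_perturb hi y hSV t A B hAdef hBdef hApos hBpos
      (by rw [habs]; exact htA) (by rw [habs]; exact htB)
      (by rw [← hMsplit]; linarith) (by rw [← hMsplit]; linarith)
  have hQm : IsSV n ε (fun x => P x + (-t) * gfun hi y P A B x) :=
    isSV_perturb hi y hSV (-t) A B hAdef hBdef hApos hBpos
      (by rw [habs']; exact htA) (by rw [habs']; exact htB)
      (by rw [← hMsplit]; linarith) (by rw [← hMsplit]; linarith)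
  have hseg : P ∈ openSegment ℝ (fun x => P x + t * gfun hi y P A B x)
      (fun x => P x + (-t) * gfun hi y P A B x) := by
    refine ⟨1/2, 1/2, by norm_num, by norm_num, by norm_num, ?_⟩
    funext x
    simp only [Pi.add_apply, Pi.smul_apply, smul_eq_mul]
    ring
  obtain ⟨heq, -⟩ := (mem_extremePoints.mp hP).2 _ hQp _ hQm hseg
  have hex : ∃ x0 ∈ Finset.univ.filter (fun x : Fin n → Bool =>
      ∀ k : Fin (i+1), x (Fin.castLE hi k) = (Fin.snoc y false : Fin (i+1) → Bool) k),
      0 < P x0 := by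
    by_contra hno
    push_neg at hno
    have hle : A ≤ 0 := Finset.sum_nonpos (fun x hx => hno x hx)
    linarith
  obtain ⟨x0, hx0mem, hx0⟩ := hex
  have hx0f : ∀ k : Fin (i+1), x0 (Fin.castLE hi k)
      = (Fin.snoc y false : Fin (i+1) → Bool) k := (Finset.mem_filter.mp hx0mem).2
  have hx0t : ¬∀ k : Fin (i+1), x0 (Fin.castLE hi k)
      = (Fin.snoc y true : Fin (i+1) → Bool) k := by
    intro hcon2
    have h1 := hx0f (Fin.last i)
    have h2 := hcon2 (Fin.last i)
    rw [Fin.snoc_last] at h1 h2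
    exact Bool.false_ne_true (h1.symm.trans h2)
  have happ := congrFun heq x0
  have hgx0 : gfun hi y P A B x0 = P x0 / A := by
    simp only [gfun]
    rw [if_pos hx0f, if_neg hx0t, sub_zero]
  simp only [hgx0] at happ
  have hz : t * (P x0 / A) = 0 := by linarith
  have h1 : 0 < P x0 / A := div_pos hx0 hApos
  nlinarith
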